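/- Let H be a finite non-abelian group with generating set X, let G be a group generated by a finite set Y with |Y| = d, and let M = max{ l_X(h) : h ∈ H } be the maximal word length of an element of H with respect to X. Then there exists c ∈ H (possibly c = 1) such that every element of the restricted regular wreath product G ≀ H is a product of at most M·(d·|H| + 1) + 1 palindromes with respect to the generating set consisting of the canonical copies of X ∪ {c} and of Y; that is, pw(G ≀ H, X ∪ {c} ∪ Y) ≤ M·(d·|H| + 1) + 1. -/

import Mathlib

open Function

section WreathDefs

variable (G A : Type*) [Group G] [Group A]

/-- The subgroup of finitely supported functions `A → G` (pointwise operations). -/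
def restrictedBase : Subgroup (A → G) where
  carrier := {f | (Function.mulSupport f).Finite}
  one_mem' := by simp [Function.mulSupport_one]
  mul_mem' := fun hf hg => (hf.union hg).subset (Function.mulSupport_mul _ _)
  inv_mem' := fun hf => by simpa [Function.mulSupport_inv] using hf

variable {G A}

lemma shift_mem (a : A) (f : restrictedBase G A) :
    (fun x => (f : A → G) (a * x)) ∈ restrictedBase G A := by
  have h : Function.mulSupport (fun x => (f : A → G) (a * x)) =
      (fun x : A => a * x) ⁻¹' Function.mulSupport (f : A → G) :=
    Function.mulSupport_comp_eq_preimage _ _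
  show (Function.mulSupport _).Finite
  rw [h]
  exact f.2.preimage (mul_right_injective a).injOn

/-- The translation automorphism of the restricted base, `(a • f) x = f (a⁻¹ * x)`. -/
noncomputable def shiftEquiv (a : A) : restrictedBase G A ≃* restrictedBase G A where
  toFun f := ⟨fun x => (f : A → G) (a⁻¹ * x), shift_mem a⁻¹ f⟩
  invFun f := ⟨fun x => (f : A → G) (a * x), shift_mem a f⟩
  left_inv f := by ext x; simp
  right_inv f := by ext x; simp
  map_mul' f g := by ext x; simp

variable (G A)

/-- The translation action of `A` on finitely supported functions `A → G`. -/
noncomputable def wreathAction : A →* MulAut (restrictedBase G A) where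
  toFun a := shiftEquiv a
  map_one' := by ext f x; simp [shiftEquiv]
  map_mul' a b := by ext f x; simp [shiftEquiv, mul_assoc]

/-- The restricted regular wreath product `G ≀ A`. -/
noncomputable abbrev Wreath := restrictedBase G A ⋊[wreathAction G A] A

variable {G A}

/-- The finitely supported function equal to `g` at `1` and trivial elsewhere. -/
noncomputable def atOne (g : G) : restrictedBase G A :=
  letI := Classical.decEq A
  ⟨fun x => if x = 1 then g else 1, by
    apply Set.Finite.subset (Set.finite_singleton (1 : A))
    intro x hx
    simp only [Function.mem_mulSupport] at hx
    by_contra hx1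
    exact hx (if_neg (by simpa using hx1))⟩

/-- The natural generating set of `G ≀ A` built from generating sets of the factors. -/
noncomputable def wreathGens (XB : Set G) (XA : Set A) : Set (Wreath G A) :=
  ((fun g => SemidirectProduct.inl (atOne g)) '' XB) ∪ (SemidirectProduct.inr '' XA)

end WreathDefs

section Palindromes

variable {W : Type*} [Group W]

/-- `g` is a palindrome with respect to `S`: it is the product of a word over `S`
(entries in `S ∪ S⁻¹`) which reads the same forwards and backwards. -/
def IsPalindrome (S : Set W) (g : W) : Prop :=
  ∃ l : List W, (∀ x ∈ l, x ∈ S ∪ S⁻¹) ∧ l.reverse = l ∧ l.prod = g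

/-- `g` is a product of at most `n` palindromes with respect to `S`. -/
def ProdOfPal (S : Set W) (n : ℕ) (g : W) : Prop :=
  ∃ l : List W, l.length ≤ n ∧ (∀ p ∈ l, IsPalindrome S p) ∧ l.prod = g

/-- The palindromic width of a group with respect to `S` (`⊤` if infinite). -/
noncomputable def palWidth (S : Set W) : ℕ∞ :=
  sInf {n : ℕ∞ | ∃ m : ℕ, n = (m : ℕ∞) ∧ ∀ g : W, ProdOfPal S m g}

/-- The word length of `g` with respect to `S`. -/
noncomputable def wordLength (S : Set W) (g : W) : ℕ :=
  sInf {n : ℕ | ∃ l : List W, l.length = n ∧ (∀ x ∈ l, x ∈ S ∪ S⁻¹) ∧ l.prod = g}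

end Palindromes

namespace PalAux
variable {M : Type*} [Group M]

/-- realizable (product, reverse-product) pairs of words with letters in `L`. -/
def Pairs (L : Set M) : Set (M × M) :=
  {pq | ∃ l : List M, (∀ x ∈ l, x ∈ L) ∧ l.prod = pq.1 ∧ l.reverse.prod = pq.2}

variable {L : Set M}

lemma pairs_one : ((1 : M), (1 : M)) ∈ Pairs L :=
  ⟨[], by simp, by simp, by simp⟩

lemma pairs_single {s : M} (hs : s ∈ L) : (s, s) ∈ Pairs L :=
  ⟨[s], by simpa, by simp, by simp⟩

lemma pairs_mul {a aR b bR : M} (ha : (a, aR) ∈ Pairs L) (hb : (b, bR) ∈ Pairs L) :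
    (a * b, bR * aR) ∈ Pairs L := by
  obtain ⟨l₁, h₁, p₁, r₁⟩ := ha
  obtain ⟨l₂, h₂, p₂, r₂⟩ := hb
  refine ⟨l₁ ++ l₂, ?_, by simp [p₁, p₂], by simp [List.reverse_append, r₁, r₂]⟩
  intro x hx
  rcases List.mem_append.1 hx with h | h
  exacts [h₁ x h, h₂ x h]

lemma pairs_swap {a aR : M} (ha : (a, aR) ∈ Pairs L) : (aR, a) ∈ Pairs L := by
  obtain ⟨l, h, p, r⟩ := ha
  exact ⟨l.reverse, by intro x hx; exact h x (List.mem_reverse.1 hx), by simp [r],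
    by simp [p]⟩

private lemma prod_map_inv (l : List M) : (l.map (·⁻¹)).prod = l.reverse.prod⁻¹ := by
  induction l with
  | nil => simp
  | cons a t ih => simp [ih, List.reverse_cons, mul_inv_rev]

lemma pairs_inv (hL : ∀ x ∈ L, x⁻¹ ∈ L) {a aR : M} (ha : (a, aR) ∈ Pairs L) :
    (a⁻¹, aR⁻¹) ∈ Pairs L := by
  obtain ⟨l, h, p, r⟩ := ha
  refine ⟨l.reverse.map (·⁻¹), ?_, ?_, ?_⟩
  · intro x hx
    obtain ⟨y, hy, rfl⟩ := List.mem_map.1 hx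
    exact hL y (h y (List.mem_reverse.1 hy))
  · rw [prod_map_inv, List.reverse_reverse, p]
  · rw [← List.map_reverse, List.reverse_reverse, prod_map_inv, r]

end PalAux

section WrAux

open SemidirectProduct

variable {G H : Type*} [Group G] [Group H] [Fintype H]

/-- The delta-function homomorphism at position `p`. -/
noncomputable def Dfun (p : H) : G →* restrictedBase G H where
  toFun g :=
    letI := Classical.decEq H
    ⟨fun x => if x = p then g else 1, Set.toFinite _⟩
  map_one' := Subtype.ext <| funext fun x => by simp
  map_mul' g₁ g₂ := Subtype.ext <| funext fun x => by
    classical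
    show (if x = p then g₁ * g₂ else 1) = (if x = p then g₁ else 1) * (if x = p then g₂ else 1)
    by_cases h : x = p <;> simp [h]

/-- The canonical copy of `G` at position `p` inside the wreath product. -/
noncomputable def DW (p : H) : G →* Wreath G H :=
  (SemidirectProduct.inl (φ := wreathAction G H)).comp (Dfun p)

lemma Dfun_one_eq_atOne (g : G) : Dfun (1 : H) g = atOne g := Subtype.ext rfl

lemma DW_inl (g : G) : DW (1 : H) g = SemidirectProduct.inl (atOne g) := by
  show SemidirectProduct.inl (Dfun (1 : H) g) = SemidirectProduct.inl (atOne g)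
  rw [Dfun_one_eq_atOne]

lemma wreathAction_Dfun (a p : H) (g : G) :
    wreathAction G H a (Dfun p g) = Dfun (a * p) g := by
  classical
  apply Subtype.ext
  funext x
  show (if a⁻¹ * x = p then g else 1) = if x = a * p then g else 1
  by_cases h : x = a * p
  · subst h; simp
  · rw [if_neg h, if_neg]
    intro hc
    exact h (by rw [← hc]; group)

lemma inr_DW (a p : H) (g : G) :
    (inr a : Wreath G H) * DW p g * inr a⁻¹ = DW (a * p) g := by
  show (inr a : Wreath G H) * SemidirectProduct.inl (Dfun p g) * inr a⁻¹
      = SemidirectProduct.inl (Dfun (a * p) g)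
  rw [← wreathAction_Dfun a p g, ← SemidirectProduct.inl_aut]

lemma inr_DW' (a p : H) (g : G) :
    (inr a : Wreath G H) * DW p g = DW (a * p) g * inr a := by
  have h := inr_DW a p g
  calc (inr a : Wreath G H) * DW p g
      = (inr a * DW p g * inr a⁻¹) * inr a := by
        rw [mul_assoc, ← map_mul, inv_mul_cancel, map_one, mul_one]
    _ = DW (a * p) g * inr a := by rw [h]

lemma DW_comm {p q : H} (hpq : p ≠ q) (g g' : G) :
    DW p g * DW q g' = DW q g' * DW p g := by
  classical
  show SemidirectProduct.inl (Dfun p g) * SemidirectProduct.inl (Dfun q g')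
      = SemidirectProduct.inl (Dfun q g') * SemidirectProduct.inl (Dfun p g)
  rw [← map_mul, ← map_mul]
  congr 1
  apply Subtype.ext
  funext x
  show (if x = p then g else 1) * (if x = q then g' else 1)
      = (if x = q then g' else 1) * (if x = p then g else 1)
  by_cases h1 : x = p
  · have h2 : ¬ x = q := fun hc => hpq (h1 ▸ hc ▸ rfl)
    simp [h1, h2, hpq]
  · simp [h1]

end WrAux

section WrLetters
set_option linter.unusedSectionVars false

open SemidirectProduct PalAux

variable {G H : Type*} [Group G] [Group H] [Fintype H]
variable (Ys : Set G) (Xs : Set H) (c : H)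

/-- Abbreviation for the generating set of the wreath product. -/
noncomputable def SWset : Set (Wreath G H) := wreathGens Ys (Xs ∪ {c})

/-- The set of letters: generators and their inverses. -/
noncomputable def LWset : Set (Wreath G H) := SWset Ys Xs c ∪ (SWset Ys Xs c)⁻¹

variable {Ys Xs c}

lemma LW_inv : ∀ x ∈ LWset Ys Xs c, x⁻¹ ∈ LWset Ys Xs c := by
  intro x hx
  rcases hx with hx | hx
  · exact Or.inr (by simpa [Set.mem_inv] using hx)
  · exact Or.inl (by simpa [Set.mem_inv] using hx)

lemma mem_LW_Y {y : G} (hy : y ∈ Ys ∪ Ys⁻¹) : DW 1 y ∈ LWset Ys Xs c := by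
  rcases hy with hy | hy
  · exact Or.inl (Or.inl ⟨y, hy, (DW_inl y).symm⟩)
  · refine Or.inr ?_
    rw [Set.mem_inv, ← map_inv]
    exact Or.inl ⟨y⁻¹, Set.mem_inv.mp hy, (DW_inl y⁻¹).symm⟩

lemma mem_LW_X {x : H} (hx : x ∈ (Xs ∪ {c}) ∪ (Xs ∪ {c})⁻¹) :
    (inr x : Wreath G H) ∈ LWset Ys Xs c := by
  rcases hx with hx | hx
  · exact Or.inl (Or.inr ⟨x, hx, rfl⟩)
  · refine Or.inr ?_
    rw [Set.mem_inv, ← map_inv]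
    exact Or.inr ⟨x⁻¹, Set.mem_inv.mp hx, rfl⟩

/-- Realizable pairs over a word for `g` consisting of base letters. -/
lemma GPair (hYg : ∃ l : List G, (∀ x ∈ l, x ∈ Ys ∪ Ys⁻¹) ∧ l.prod = g) :
    ∃ g2 : G, (DW (1 : H) g, DW (1 : H) g2) ∈ Pairs (LWset Ys Xs c) := by
  obtain ⟨l, hl, hp⟩ := hYg
  refine ⟨l.reverse.prod, l.map (DW (1 : H)), ?_, ?_, ?_⟩
  · intro x hx
    obtain ⟨y, hy, rfl⟩ := List.mem_map.1 hx
    exact mem_LW_Y (hl y hy)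
  · rw [← map_list_prod, hp]
  · rw [← List.map_reverse, ← map_list_prod]

lemma HPair {h : H} (hXh : ∃ l : List H, (∀ x ∈ l, x ∈ Xs ∪ Xs⁻¹) ∧ l.prod = h) :
    ∃ h2 : H, ((inr h : Wreath G H), (inr h2 : Wreath G H)) ∈ Pairs (LWset Ys Xs c) := by
  obtain ⟨l, hl, hp⟩ := hXh
  refine ⟨l.reverse.prod, l.map (inr : H →* Wreath G H), ?_, ?_, ?_⟩
  · intro x hx
    obtain ⟨y, hy, rfl⟩ := List.mem_map.1 hx
    refine mem_LW_X ?_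
    rcases hl y hy with h1 | h1
    · exact Or.inl (Or.inl h1)
    · exact Or.inr (by rw [Set.mem_inv]; exact Or.inl (Set.mem_inv.mp h1))
  · rw [← map_list_prod, hp]
  · rw [← List.map_reverse, ← map_list_prod]

/-- Sandwich palindromes. -/
lemma pal_sandwich {v w : Wreath G H} (hvw : (v, w) ∈ Pairs (LWset Ys Xs c))
    (mid : List (Wreath G H)) (hmid : ∀ x ∈ mid, x ∈ LWset Ys Xs c)
    (hrev : mid.reverse = mid) :
    IsPalindrome (SWset Ys Xs c) (v * mid.prod * w) := by
  obtain ⟨l, hl, hp, hr⟩ := hvw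
  refine ⟨l ++ mid ++ l.reverse, ?_, ?_, ?_⟩
  · intro x hx
    rcases List.mem_append.1 hx with hx | hx
    · rcases List.mem_append.1 hx with hx | hx
      · exact hl x hx
      · exact hmid x hx
    · exact hl x (List.mem_reverse.1 hx)
  · simp [List.reverse_append, hrev, List.append_assoc]
  · simp [hp, hr, mul_assoc]

lemma pal_pair {v w : Wreath G H} (hvw : (v, w) ∈ Pairs (LWset Ys Xs c)) :
    IsPalindrome (SWset Ys Xs c) (v * w) := by
  have := pal_sandwich hvw [] (by simp) (by simp)
  simpa using this

end WrLetters

section CChoice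

open PalAux

variable {M : Type*} [Group M]

lemma exists_word {s : Set M} (hs : Subgroup.closure s = ⊤) (g : M) :
    ∃ l : List M, (∀ x ∈ l, x ∈ s ∪ s⁻¹) ∧ l.prod = g := by
  have hg : g ∈ Subgroup.closure s := hs ▸ Subgroup.mem_top g
  have hg2 : g ∈ Submonoid.closure (s ∪ s⁻¹) := by
    rw [← Subgroup.closure_toSubmonoid]
    exact hg
  exact Submonoid.exists_list_of_mem_closure hg2

lemma letters_inv_closed (s : Set M) : ∀ x ∈ s ∪ s⁻¹, x⁻¹ ∈ s ∪ s⁻¹ := by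
  intro x hx
  rcases hx with hx | hx
  · exact Or.inr (by simpa [Set.mem_inv] using hx)
  · exact Or.inl (by simpa [Set.mem_inv] using hx)

lemma pairs_mono {L₁ L₂ : Set M} (h : L₁ ⊆ L₂) {pq : M × M} (hpq : pq ∈ Pairs L₁) :
    pq ∈ Pairs L₂ := by
  obtain ⟨l, hl, hp, hr⟩ := hpq
  exact ⟨l, fun x hx => h (hl x hx), hp, hr⟩

lemma exists_good_c {s : Set M} (hs : Subgroup.closure s = ⊤)
    (hna : ∃ a b : M, a * b ≠ b * a) :
    ∃ (c k₀ : M), k₀ ≠ 1 ∧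
      (k₀, (1 : M)) ∈ Pairs ((s ∪ {c}) ∪ (s ∪ {c})⁻¹) := by
  by_contra hcon
  push_neg at hcon
  have triv : ∀ (c k : M), (k, (1:M)) ∈ Pairs ((s ∪ {c}) ∪ (s ∪ {c})⁻¹) → k = 1 := by
    intro c k hp
    by_contra hk
    exact hcon c k hk hp
  have inj : ∀ (c p q₁ q₂ : M), (p, q₁) ∈ Pairs ((s ∪ {c}) ∪ (s ∪ {c})⁻¹) →
      (p, q₂) ∈ Pairs ((s ∪ {c}) ∪ (s ∪ {c})⁻¹) → q₁ = q₂ := by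
    intro c p q₁ q₂ h1 h2
    have h3 := pairs_mul h1 (pairs_inv (letters_inv_closed _) h2)
    rw [mul_inv_cancel] at h3
    have h4 := pairs_swap h3
    have h5 := triv c _ h4
    have : q₁ = q₂ * (q₂⁻¹ * q₁) := by group
    rw [h5, mul_one] at this
    exact this
  have hsub : ∀ c : M, s ∪ s⁻¹ ⊆ (s ∪ {c}) ∪ (s ∪ {c})⁻¹ := by
    intro c x hx
    rcases hx with hx | hx
    · exact Or.inl (Or.inl hx)
    · exact Or.inr (Set.inv_subset_inv.2 Set.subset_union_left hx)
  have Xp : ∀ p : M, ∃ q, (p, q) ∈ Pairs (s ∪ s⁻¹) := by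
    intro p
    obtain ⟨l, hl, hp⟩ := exists_word hs p
    exact ⟨l.reverse.prod, l, hl, hp, rfl⟩
  choose θ hθ using Xp
  have anti : ∀ p q : M, θ (p * q) = θ q * θ p := by
    intro p q
    exact inj 1 (p * q) _ _ (pairs_mono (hsub 1) (hθ (p * q)))
      (pairs_mono (hsub 1) (pairs_mul (hθ p) (hθ q)))
  by_cases hid : ∀ r : M, θ r = r
  · obtain ⟨a, b, hab⟩ := hna
    apply hab
    have := anti a b
    rw [hid, hid, hid] at this
    exact this
  · push_neg at hid
    obtain ⟨c₀, hc₀⟩ := hid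
    apply hc₀
    refine inj c₀ c₀ _ _ (pairs_mono (hsub c₀) (hθ c₀)) ?_
    exact pairs_single (Or.inl (Or.inr rfl))

end CChoice

section Gadget
set_option linter.unusedSectionVars false

open PalAux SemidirectProduct
open scoped commutatorElement

variable {G H : Type*} [Group G] [Group H] [Fintype H]
variable {Ys : Set G} {Xs : Set H} {c : H}

lemma GPairRev (hY : Subgroup.closure Ys = ⊤) (g : G) :
    ∃ g2, (DW (1 : H) g2, DW (1 : H) g) ∈ Pairs (LWset Ys Xs c) := by
  obtain ⟨g2, hg⟩ := GPair (Ys := Ys) (Xs := Xs) (c := c) (exists_word hY g)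
  exact ⟨g2, pairs_swap hg⟩

lemma HPairRev (hX : Subgroup.closure Xs = ⊤) (h : H) :
    ∃ h2, ((inr h2 : Wreath G H), (inr h : Wreath G H)) ∈ Pairs (LWset Ys Xs c) := by
  obtain ⟨h2, hh⟩ := HPair (Ys := Ys) (c := c) (exists_word hX h)
  exact ⟨h2, pairs_swap hh⟩

lemma gadget (hY : Subgroup.closure Ys = ⊤) (hX : Subgroup.closure Xs = ⊤)
    {k₀ : H} (hk : k₀ ≠ 1)
    (hkp : ((inr k₀ : Wreath G H), (1 : Wreath G H)) ∈ Pairs (LWset Ys Xs c))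
    (p : H) (z₁ z₂ : G) :
    ((1 : Wreath G H), DW p ⁅z₁, z₂⁆) ∈ Pairs (LWset Ys Xs c) := by
  obtain ⟨t, hT⟩ := HPairRev (Ys := Ys) (c := c) hX p⁻¹
  obtain ⟨u, hU⟩ := GPairRev (Xs := Xs) (c := c) hY z₂⁻¹
  obtain ⟨u', hU'⟩ := GPairRev (Xs := Xs) (c := c) hY z₁⁻¹
  have hTinv := pairs_inv LW_inv hT
  have hA0 := pairs_mul (pairs_mul hT hU) hTinv
  have eA1 : inr t * DW (1 : H) u * (inr t : Wreath G H)⁻¹ = DW t u := by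
    rw [← map_inv]
    have h := inr_DW t 1 u
    rwa [mul_one] at h
  have eA2 : ((inr p⁻¹ : Wreath G H))⁻¹ * (DW (1 : H) z₂⁻¹ * inr p⁻¹) = DW p z₂⁻¹ := by
    rw [← map_inv, inv_inv, ← mul_assoc]
    have h := inr_DW p 1 z₂⁻¹
    rwa [mul_one] at h
  rw [eA1, eA2] at hA0
  have hT' := pairs_mul hT hkp
  rw [← map_mul, one_mul] at hT'
  have hB0 := pairs_mul (pairs_mul hT' hU') (pairs_inv LW_inv hT')
  have eB1 : inr (t * k₀) * DW (1 : H) u' * (inr (t * k₀) : Wreath G H)⁻¹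
      = DW (t * k₀) u' := by
    rw [← map_inv]
    have h := inr_DW (t * k₀) 1 u'
    rwa [mul_one] at h
  have eB2 : ((inr p⁻¹ : Wreath G H))⁻¹ * (DW (1 : H) z₁⁻¹ * inr p⁻¹) = DW p z₁⁻¹ := by
    rw [← map_inv, inv_inv, ← mul_assoc]
    have h := inr_DW p 1 z₁⁻¹
    rwa [mul_one] at h
  rw [eB1, eB2] at hB0
  have key := pairs_mul (pairs_mul (pairs_mul hA0 hB0) (pairs_inv LW_inv hA0))
    (pairs_inv LW_inv hB0)
  have hne : t ≠ t * k₀ := by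
    intro hc
    apply hk
    have h1 : t * 1 = t * k₀ := by rw [mul_one, ← hc]
    exact (mul_left_cancel h1).symm
  have e1 : DW t u * DW (t * k₀) u' * (DW t u)⁻¹ * (DW (t * k₀) u')⁻¹
      = (1 : Wreath G H) := by
    rw [DW_comm hne u u']
    group
  have e2 : (DW p z₁⁻¹)⁻¹ * ((DW p z₂⁻¹)⁻¹ * (DW p z₁⁻¹ * DW p z₂⁻¹))
      = DW p ⁅z₁, z₂⁆ := by
    simp only [← map_inv, inv_inv, ← map_mul, commutatorElement_def]
    congr 1
    group
  rw [e1, e2] at key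
  exact key

/-- The subgroup of elements `w` with `(1, w)` a realizable pair. -/
noncomputable def Kgrp (Ys : Set G) (Xs : Set H) (c : H) : Subgroup (Wreath G H) where
  carrier := {w | ((1 : Wreath G H), w) ∈ Pairs (LWset Ys Xs c)}
  one_mem' := pairs_one
  mul_mem' := by
    intro a b ha hb
    have := pairs_mul hb ha
    simpa using this
  inv_mem' := by
    intro a ha
    have := pairs_inv LW_inv ha
    simpa using this

lemma commutator_in_K (hY : Subgroup.closure Ys = ⊤) (hX : Subgroup.closure Xs = ⊤)
    {k₀ : H} (hk : k₀ ≠ 1)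
    (hkp : ((inr k₀ : Wreath G H), (1 : Wreath G H)) ∈ Pairs (LWset Ys Xs c))
    (p : H) {z : G} (hz : z ∈ commutator G) :
    ((1 : Wreath G H), DW p z) ∈ Pairs (LWset Ys Xs c) := by
  have hle : commutator G ≤ (Kgrp Ys Xs c).comap (DW p) := by
    rw [commutator_def]
    refine Subgroup.commutator_le.mpr fun g₁ _ g₂ _ => ?_
    exact gadget hY hX hk hkp p g₁ g₂
  exact hle hz

end Gadget

section Sched
set_option linter.unusedSectionVars false

open PalAux SemidirectProduct

variable {G H : Type*} [Group G] [Group H] [Fintype H]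
variable {Ys : Set G} {Xs : Set H} {c : H}

lemma Dfun_apply_self (p : H) (g : G) : ((Dfun p g : restrictedBase G H) : H → G) p = g :=
  if_pos rfl

lemma Dfun_apply_ne (p : H) (g : G) {x : H} (hx : x ≠ p) :
    ((Dfun p g : restrictedBase G H) : H → G) x = 1 :=
  if_neg hx

lemma eval_prod_not (v : H → G) (l : List H) (x : H) (hx : x ∉ l) :
    (((l.map (fun h => Dfun h (v h))).prod : restrictedBase G H) : H → G) x = 1 := by
  induction l with
  | nil => rfl
  | cons h t ih =>
    have hxh : x ≠ h := fun hc => hx (hc ▸ List.mem_cons_self)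
    have hxt : x ∉ t := fun hc => hx (List.mem_cons_of_mem h hc)
    simp only [List.map_cons, List.prod_cons]
    have e : (((Dfun h (v h) * (t.map (fun h => Dfun h (v h))).prod :
        restrictedBase G H)) : H → G) x
        = ((Dfun h (v h) : H → G) x) *
          (((t.map (fun h => Dfun h (v h))).prod : restrictedBase G H) : H → G) x := rfl
    rw [e, ih hxt]
    rw [Dfun_apply_ne h (v h) hxh, one_mul]

lemma eval_prod_mem (v : H → G) (l : List H) (hnd : l.Nodup) (x : H) (hx : x ∈ l) :
    (((l.map (fun h => Dfun h (v h))).prod : restrictedBase G H) : H → G) x = v x := by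
  induction l with
  | nil => exact absurd hx List.not_mem_nil
  | cons h t ih =>
    have hnd' : t.Nodup := (List.nodup_cons.1 hnd).2
    have hht : h ∉ t := (List.nodup_cons.1 hnd).1
    simp only [List.map_cons, List.prod_cons]
    have e : (((Dfun h (v h) * (t.map (fun h => Dfun h (v h))).prod :
        restrictedBase G H)) : H → G) x
        = ((Dfun h (v h) : H → G) x) *
          (((t.map (fun h => Dfun h (v h))).prod : restrictedBase G H) : H → G) x := rfl
    rw [e]
    by_cases hxh : x = h
    · subst hxh
      rw [eval_prod_not v t x hht, Dfun_apply_self, mul_one]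
    · have hxt : x ∈ t := by
        rcases List.mem_cons.1 hx with hc | hc
        · exact absurd hc hxh
        · exact hc
      rw [ih hnd' hxt, Dfun_apply_ne h (v h) hxh, one_mul]

lemma prod_DW_eq_inl (v : H → G) :
    ((Finset.univ.toList).map (fun h => DW h (v h))).prod
      = SemidirectProduct.inl (⟨v, Set.toFinite _⟩ : restrictedBase G H) := by
  have h1 : (Finset.univ.toList).map (fun h => DW (G := G) h (v h))
      = ((Finset.univ.toList).map (fun h => Dfun h (v h))).map
          (SemidirectProduct.inl (φ := wreathAction G H)) := by
    rw [List.map_map]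
    rfl
  rw [h1, ← map_list_prod]
  congr 1
  apply Subtype.ext
  funext x
  rw [eval_prod_mem v _ (Finset.nodup_toList _) x
    (Finset.mem_toList.mpr (Finset.mem_univ x))]

/-- `g` admits palindromic "sandwich" realizations at every position. -/
def PalCore (Ys : Set G) (Xs : Set H) (c : H) (g : G) : Prop :=
  ∀ τ : H, ∃ h', IsPalindrome (SWset Ys Xs c)
    ((inr τ : Wreath G H) * DW 1 g * inr h')

lemma palpow (hX : Subgroup.closure Xs = ⊤) {y : G} (hy : y ∈ Ys) (k : ℤ) :
    PalCore Ys Xs c (y ^ k) := by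
  intro τ
  obtain ⟨τ', hτ⟩ := HPair (Ys := Ys) (c := c) (exists_word hX τ)
  obtain ⟨s, n, hs, hpow⟩ : ∃ (s : Wreath G H) (n : ℕ),
      s ∈ LWset Ys Xs c ∧ s ^ n = DW (1 : H) (y ^ k) := by
    rcases Int.eq_nat_or_neg k with ⟨n, rfl | rfl⟩
    · refine ⟨DW 1 y, n, mem_LW_Y (Or.inl hy), ?_⟩
      rw [← map_pow]
      congr 1
      rw [zpow_natCast]
    · refine ⟨(DW 1 y)⁻¹, n, ?_, ?_⟩
      · exact LW_inv _ (mem_LW_Y (Or.inl hy))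
      · rw [inv_pow, ← map_pow, ← map_inv]
        congr 1
        rw [zpow_neg, zpow_natCast]
  refine ⟨τ', ?_⟩
  have hp := pal_sandwich hτ (List.replicate n s)
    (fun x hx => by rw [List.eq_of_mem_replicate hx]; exact hs)
    List.reverse_replicate
  rwa [List.prod_replicate, hpow] at hp

lemma inr_pull (δ : H) (t : List (H × G)) (f : H → H) :
    (inr δ : Wreath G H) * (t.map (fun pg => DW (f pg.1) pg.2)).prod
      = (t.map (fun pg => DW (δ * f pg.1) pg.2)).prod * inr δ := by
  induction t with
  | nil => simp
  | cons a r ih =>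
    simp only [List.map_cons, List.prod_cons]
    rw [← mul_assoc, inr_DW', mul_assoc, ih, ← mul_assoc]

lemma sched : ∀ (l : List (H × G)), (∀ pg ∈ l, PalCore Ys Xs c pg.2) →
    ∀ σ : H, ∃ (pl : List (Wreath G H)) (γ : H),
      pl.length = l.length ∧ (∀ q ∈ pl, IsPalindrome (SWset Ys Xs c) q) ∧
      pl.prod = (l.map (fun pg => DW (σ * pg.1) pg.2)).prod * inr γ := by
  intro l
  induction l with
  | nil =>
    intro _ σ
    exact ⟨[], 1, rfl, by simp, by simp⟩
  | cons a r ih =>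
    intro hl σ
    obtain ⟨h', hpal⟩ := hl a List.mem_cons_self (σ * a.1)
    obtain ⟨pl_r, γr, hlen, hpals, hprod⟩ :=
      ih (fun pg h => hl pg (List.mem_cons_of_mem a h)) ((σ * a.1 * h')⁻¹ * σ)
    refine ⟨(inr (σ * a.1) * DW 1 a.2 * inr h') :: pl_r, (σ * a.1 * h') * γr,
      by simp [hlen], ?_, ?_⟩
    · intro q hq
      rcases List.mem_cons.1 hq with hq | hq
      · rw [hq]; exact hpal
      · exact hpals q hq
    · simp only [List.prod_cons, List.map_cons]
      rw [hprod]
      set δ := σ * a.1 * h' with hδ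
      have hV : (inr (σ * a.1) : Wreath G H) * DW 1 a.2 * inr h'
          = DW (σ * a.1) a.2 * inr δ := by
        rw [hδ, inr_DW', mul_one, mul_assoc, ← map_mul]
      have hpull := inr_pull (G := G) δ r (fun x => δ⁻¹ * σ * x)
      have hsimp : (fun pg : H × G => DW (δ * (δ⁻¹ * σ * pg.1)) pg.2)
          = fun pg : H × G => DW (σ * pg.1) pg.2 := by
        funext pg
        congr 1
        group
      rw [hsimp] at hpull
      have key : (inr δ : Wreath G H) *
          ((r.map (fun pg => DW (δ⁻¹ * σ * pg.1) pg.2)).prod * inr γr)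
          = (r.map (fun pg => DW (σ * pg.1) pg.2)).prod * inr (δ * γr) := by
        rw [← mul_assoc, hpull, mul_assoc, ← map_mul]
      rw [hV, mul_assoc, key, ← mul_assoc]

end Sched

section Abel

variable {G : Type*} [Group G]

/-- Powers-product over the generating finset. -/
noncomputable def powProd (Y : Finset G) (k : {y // y ∈ Y} → ℤ) : G :=
  (Y.attach.toList.map (fun y : {y // y ∈ Y} => (y : G) ^ (k y))).prod

lemma of_powProd (Y : Finset G) (k : {y // y ∈ Y} → ℤ) :
    Abelianization.of (powProd Y k)
      = ∏ y ∈ Y.attach, (Abelianization.of (y : G)) ^ (k y) := by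
  rw [powProd, map_list_prod, List.map_map]
  have e : (Abelianization.of ∘ fun y : {y // y ∈ Y} => (y : G) ^ k y)
      = fun y : {y // y ∈ Y} => (Abelianization.of (y : G)) ^ k y := by
    funext y
    simp [Function.comp, map_zpow]
  rw [e, Finset.prod_map_toList]

lemma abel_decomp (Y : Finset G) (hY : Subgroup.closure (Y : Set G) = ⊤) (g : G) :
    ∃ (k : {y // y ∈ Y} → ℤ) (z : G), z ∈ commutator G ∧ g = powProd Y k * z := by
  classical
  have main : ∀ (l : List G), (∀ x ∈ l, x ∈ (Y : Set G) ∪ (Y : Set G)⁻¹) →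
      ∃ k : {y // y ∈ Y} → ℤ,
        Abelianization.of l.prod = Abelianization.of (powProd Y k) := by
    intro l
    induction l with
    | nil =>
      intro _
      refine ⟨0, ?_⟩
      rw [of_powProd]
      simp
    | cons a t ih =>
      intro hl
      obtain ⟨kt, hkt⟩ := ih (fun x hx => hl x (List.mem_cons_of_mem a hx))
      have hsingle : ∀ (b : G) (hb : b ∈ Y),
          Abelianization.of b
            = Abelianization.of (powProd Y (fun y => if y = ⟨b, hb⟩ then 1 else 0)) := by
        intro b hb
        rw [of_powProd]
        rw [Finset.prod_eq_single (⟨b, hb⟩ : {y // y ∈ Y})]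
        · simp
        · intro y _ hy
          simp [hy]
        · intro hy
          exact absurd (Finset.mem_attach _ _) hy
      have hadd : ∀ k₁ k₂ : {y // y ∈ Y} → ℤ,
          Abelianization.of (powProd Y (k₁ + k₂))
            = Abelianization.of (powProd Y k₁) * Abelianization.of (powProd Y k₂) := by
        intro k₁ k₂
        rw [of_powProd, of_powProd, of_powProd, ← Finset.prod_mul_distrib]
        congr 1
        funext y
        rw [Pi.add_apply, zpow_add]
      rcases hl a List.mem_cons_self with ha | ha
      · refine ⟨(fun y => if y = ⟨a, ha⟩ then 1 else 0) + kt, ?_⟩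
        rw [List.prod_cons, map_mul, hadd, ← hsingle a ha, hkt]
      · have ha' : a⁻¹ ∈ Y := Set.mem_inv.mp ha
        refine ⟨(fun y => if y = ⟨a⁻¹, ha'⟩ then -1 else 0) + kt, ?_⟩
        rw [List.prod_cons, map_mul, hadd, hkt]
        congr 1
        have hzero : Abelianization.of (powProd Y (0 : {y // y ∈ Y} → ℤ)) = 1 := by
          rw [of_powProd]
          simp
        have hsum := hadd (fun y => if y = ⟨a⁻¹, ha'⟩ then 1 else 0)
          (fun y => if y = ⟨a⁻¹, ha'⟩ then -1 else 0)
        have hzero' : ((fun y : {y // y ∈ Y} => if y = ⟨a⁻¹, ha'⟩ then (1 : ℤ) else 0)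
            + fun y => if y = ⟨a⁻¹, ha'⟩ then -1 else 0) = 0 := by
          funext y
          by_cases hy : y = ⟨a⁻¹, ha'⟩ <;> simp [hy]
        rw [hzero', hzero] at hsum
        have hinv := inv_eq_of_mul_eq_one_right hsum.symm
        rw [← hsingle a⁻¹ ha'] at hinv
        rw [← hinv, map_inv, inv_inv]
  obtain ⟨l, hl, rfl⟩ := exists_word hY g
  obtain ⟨k, hk⟩ := main l hl
  refine ⟨k, (powProd Y k)⁻¹ * l.prod, ?_, by group⟩
  have h1 : Abelianization.of ((powProd Y k)⁻¹ * l.prod) = 1 := by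
    rw [map_mul, map_inv, hk]
    group
  exact (QuotientGroup.eq_one_iff _).mp h1

end Abel

section Mlem

variable {H : Type*} [Group H] [Fintype H]

lemma exists_short_word (X : Finset H) (hX : Subgroup.closure (X : Set H) = ⊤)
    (M : ℕ) (hM : M = Finset.univ.sup fun h : H => wordLength (X : Set H) h) (h : H) :
    ∃ l : List H, l.length ≤ M ∧ (∀ x ∈ l, x ∈ (X : Set H) ∪ (X : Set H)⁻¹) ∧
      l.prod = h := by
  have hne : {n : ℕ | ∃ l : List H, l.length = n ∧
      (∀ x ∈ l, x ∈ (X : Set H) ∪ (X : Set H)⁻¹) ∧ l.prod = h}.Nonempty := by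
    obtain ⟨l, hl, hp⟩ := exists_word hX h
    exact ⟨l.length, l, rfl, hl, hp⟩
  have hmem := Nat.sInf_mem hne
  obtain ⟨l, hlen, hl, hp⟩ := hmem
  refine ⟨l, ?_, hl, hp⟩
  rw [hlen]
  have : wordLength (X : Set H) h ≤ M := by
    rw [hM]
    exact Finset.le_sup (Finset.mem_univ h)
  exact this

lemma one_le_M (X : Finset H) (hX : Subgroup.closure (X : Set H) = ⊤)
    (hna : ∃ a b : H, a * b ≠ b * a)
    (M : ℕ) (hM : M = Finset.univ.sup fun h : H => wordLength (X : Set H) h) :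
    1 ≤ M := by
  obtain ⟨a, b, hab⟩ := hna
  have ha : a ≠ 1 := fun hc => hab (by rw [hc, one_mul, mul_one])
  have hne : {n : ℕ | ∃ l : List H, l.length = n ∧
      (∀ x ∈ l, x ∈ (X : Set H) ∪ (X : Set H)⁻¹) ∧ l.prod = a}.Nonempty := by
    obtain ⟨l, hl, hp⟩ := exists_word hX a
    exact ⟨l.length, l, rfl, hl, hp⟩
  have hpos : 1 ≤ wordLength (X : Set H) a := by
    by_contra hw
    push_neg at hw
    have hw0 : wordLength (X : Set H) a = 0 := by omega
    have hmem := Nat.sInf_mem hne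
    rw [show sInf {n : ℕ | ∃ l : List H, l.length = n ∧
      (∀ x ∈ l, x ∈ (X : Set H) ∪ (X : Set H)⁻¹) ∧ l.prod = a}
        = wordLength (X : Set H) a from rfl, hw0] at hmem
    obtain ⟨l, hlen, _, hp⟩ := hmem
    rw [List.length_eq_zero_iff.mp hlen] at hp
    exact ha (by simpa using hp.symm)
  calc 1 ≤ wordLength (X : Set H) a := hpos
    _ ≤ M := by rw [hM]; exact Finset.le_sup (Finset.mem_univ a)

end Mlem

section Flat
set_option linter.unusedSectionVars false

open PalAux SemidirectProduct

variable {G H : Type*} [Group G] [Group H] [Fintype H]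

/-- Flattened list of (position, generator-power) tasks. -/
noncomputable def flatPairs (Y : Finset G) (k : H → {y // y ∈ Y} → ℤ) :
    List H → List (H × G)
  | [] => []
  | h :: t => (Y.attach.toList.map fun y : {y // y ∈ Y} => (h, (y : G) ^ (k h y)))
      ++ flatPairs Y k t

lemma flatPairs_length (Y : Finset G) (k : H → {y // y ∈ Y} → ℤ) (L : List H) :
    (flatPairs Y k L).length = L.length * Y.card := by
  induction L with
  | nil => simp [flatPairs]
  | cons h t ih =>
    simp only [flatPairs, List.length_append, List.length_map, List.length_cons, ih,
      Finset.length_toList, Finset.card_attach]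
    ring

lemma flatPairs_mem (Y : Finset G) (k : H → {y // y ∈ Y} → ℤ) (L : List H)
    (pg : H × G) (hpg : pg ∈ flatPairs Y k L) :
    ∃ (h : H) (y : {y // y ∈ Y}), pg = (h, (y : G) ^ (k h y)) := by
  induction L with
  | nil => exact absurd hpg List.not_mem_nil
  | cons h t ih =>
    rcases List.mem_append.1 hpg with hm | hm
    · obtain ⟨y, _, rfl⟩ := List.mem_map.1 hm
      exact ⟨h, y, rfl⟩
    · exact ih hm

lemma flatPairs_prod (Y : Finset G) (k : H → {y // y ∈ Y} → ℤ) (L : List H) :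
    ((flatPairs Y k L).map (fun pg : H × G => DW pg.1 pg.2)).prod
      = (L.map (fun h => DW h (powProd Y (k h)))).prod := by
  induction L with
  | nil => simp [flatPairs]
  | cons h t ih =>
    simp only [flatPairs, List.map_append, List.prod_append, List.map_cons, List.prod_cons, ih]
    congr 1
    rw [List.map_map]
    have e : ((fun pg : H × G => DW pg.1 pg.2) ∘
        (fun y : {y // y ∈ Y} => ((h, (y : G) ^ (k h y)) : H × G)))
        = (DW h : G →* Wreath G H) ∘ (fun y : {y // y ∈ Y} => (y : G) ^ (k h y)) := rfl
    rw [e, ← List.map_map, ← map_list_prod]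
    rfl

end Flat

/-- Let `H` be a finite non-abelian group generated by `X`, with
`M = max { l_X(h) : h ∈ H }`, and `G` a group generated by a finite set `Y` with `|Y| = d`.
Then there is `c ∈ H` (possibly `c = 1`) such that every element of `G ≀ H` is a product
of at most `M·(d·|H| + 1) + 1` palindromes with respect to the canonical copies of
`X ∪ {c}` and of `Y`. -/
theorem wreath_finite_palindromic_width {G H : Type*} [Group G] [Group H] [Fintype H]
    (X : Finset H) (hX : Subgroup.closure (X : Set H) = ⊤)
    (hna : ∃ a b : H, a * b ≠ b * a)
    (Y : Finset G) (d : ℕ) (hY : Subgroup.closure (Y : Set G) = ⊤) (hd : Y.card = d)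
    (M : ℕ) (hM : M = Finset.univ.sup fun h : H => wordLength (X : Set H) h) :
    ∃ c : H, ∀ g : Wreath G H,
      ProdOfPal (wreathGens (Y : Set G) ((X : Set H) ∪ {c}))
        (M * (d * Fintype.card H + 1) + 1) g := by
  classical
  obtain ⟨c, k₀, hk₀, hkpH⟩ := exists_good_c hX hna
  refine ⟨c, ?_⟩
  intro g
  show ProdOfPal (SWset (Y : Set G) (X : Set H) c) (M * (d * Fintype.card H + 1) + 1) g
  -- transfer the special pair to the wreath product
  have hkp : ((SemidirectProduct.inr k₀ : Wreath G H), (1 : Wreath G H)) ∈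
      PalAux.Pairs (LWset (Y : Set G) (X : Set H) c) := by
    obtain ⟨l, hl, hp, hr⟩ := hkpH
    refine ⟨l.map (SemidirectProduct.inr (φ := wreathAction G H)), ?_, ?_, ?_⟩
    · intro x hx
      obtain ⟨y, hy, rfl⟩ := List.mem_map.1 hx
      exact mem_LW_X (hl y hy)
    · show (l.map _).prod = _
      rw [← map_list_prod, hp]
    · show (l.map _).reverse.prod = _
      rw [← List.map_reverse, ← map_list_prod, hr, map_one]
  -- abelian decomposition of the base values
  have hdec := fun h : H => abel_decomp Y hY ((g.left : H → G) h)
  choose k z hz hfz using hdec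
  -- schedule the nd power palindromes
  have hcore : ∀ pg ∈ flatPairs Y k Finset.univ.toList,
      PalCore (Y : Set G) (X : Set H) c pg.2 := by
    intro pg hpg
    obtain ⟨h, y, rfl⟩ := flatPairs_mem Y k _ pg hpg
    exact palpow hX y.property (k h y)
  obtain ⟨pl₁, γ₁, hlen₁, hpals₁, hprod₁⟩ :=
    sched (flatPairs Y k Finset.univ.toList) hcore 1
  have hone : (fun pg : H × G => DW ((1 : H) * pg.1) pg.2)
      = fun pg : H × G => DW pg.1 pg.2 := by
    funext pg
    rw [one_mul]
  rw [hone, flatPairs_prod, prod_DW_eq_inl (fun h => powProd Y (k h))] at hprod₁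
  set Vfn : restrictedBase G H := ⟨fun h => powProd Y (k h), Set.toFinite _⟩ with hVfn
  set F₂ : restrictedBase G H := ⟨fun x => z (γ₁ * x), Set.toFinite _⟩ with hF₂
  set b : H := γ₁⁻¹ * g.right with hbdef
  -- decomposition of the target
  have hgdec : g = (SemidirectProduct.inl Vfn * SemidirectProduct.inr γ₁) *
      (SemidirectProduct.inl F₂ * SemidirectProduct.inr b) := by
    have hleft0 : (((SemidirectProduct.inl Vfn * SemidirectProduct.inr γ₁) *
        (SemidirectProduct.inl F₂ * SemidirectProduct.inr b) : Wreath G H)).left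
        = Vfn * (wreathAction G H γ₁) F₂ := by
      simp only [SemidirectProduct.mul_left, SemidirectProduct.left_inl,
        SemidirectProduct.right_inl, SemidirectProduct.left_inr,
        SemidirectProduct.right_inr, map_one, mul_one, one_mul]
      have hr : ((SemidirectProduct.inl Vfn * SemidirectProduct.inr γ₁ : Wreath G H)).right
          = γ₁ := by
        simp [SemidirectProduct.mul_right]
      rw [hr]
    have hright0 : (((SemidirectProduct.inl Vfn * SemidirectProduct.inr γ₁) *
        (SemidirectProduct.inl F₂ * SemidirectProduct.inr b) : Wreath G H)).right = γ₁ * b := by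
      simp only [SemidirectProduct.mul_right, SemidirectProduct.right_inl,
        SemidirectProduct.right_inr, one_mul, mul_one]
    refine SemidirectProduct.ext ?_ ?_
    · rw [hleft0]
      apply Subtype.ext
      funext x
      have e : ((Vfn * (wreathAction G H γ₁) F₂ : restrictedBase G H) : H → G) x
          = powProd Y (k x) * z (γ₁ * (γ₁⁻¹ * x)) := rfl
      show (g.left : H → G) x = _
      rw [e, mul_inv_cancel_left]
      exact hfz x
    · rw [hright0, hbdef, mul_inv_cancel_left]
  -- the single middle palindrome
  have hKmem : ((1 : Wreath G H), SemidirectProduct.inl F₂) ∈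
      PalAux.Pairs (LWset (Y : Set G) (X : Set H) c) := by
    have hFe : SemidirectProduct.inl (φ := wreathAction G H) F₂
        = ((Finset.univ.toList.map (fun h => DW h (z (γ₁ * h)))).prod) :=
      (prod_DW_eq_inl _).symm
    rw [hFe]
    have hmem : ∀ w ∈ Finset.univ.toList.map (fun h => DW h (z (γ₁ * h))),
        w ∈ Kgrp (Y : Set G) (X : Set H) c := by
      intro w hw
      obtain ⟨h, _, rfl⟩ := List.mem_map.1 hw
      exact commutator_in_K hY hX hk₀ hkp h (hz (γ₁ * h))
    exact Subgroup.list_prod_mem _ hmem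
  have hpal₂ : IsPalindrome (SWset (Y : Set G) (X : Set H) c)
      (SemidirectProduct.inl F₂) := by
    have h := pal_pair (PalAux.pairs_swap hKmem)
    rwa [mul_one] at h
  -- the tail word for the H-part
  obtain ⟨lb, hlb_len, hlb_letters, hlb_prod⟩ := exists_short_word X hX M hM b
  set pl₃ := lb.map (fun x => (SemidirectProduct.inr x : Wreath G H)) with hpl₃
  have hpals₃ : ∀ q ∈ pl₃, IsPalindrome (SWset (Y : Set G) (X : Set H) c) q := by
    intro q hq
    obtain ⟨x, hx, rfl⟩ := List.mem_map.1 hq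
    refine ⟨[SemidirectProduct.inr x], ?_, rfl, by simp⟩
    intro w hw
    rw [List.mem_singleton.1 hw]
    refine mem_LW_X ?_
    rcases hlb_letters x hx with h | h
    · exact Or.inl (Or.inl h)
    · exact Or.inr (Set.inv_subset_inv.2 Set.subset_union_left h)
  have hprod₃ : pl₃.prod = SemidirectProduct.inr b := by
    rw [hpl₃, ← map_list_prod, hlb_prod]
  -- assemble everything
  refine ⟨pl₁ ++ (SemidirectProduct.inl F₂ :: pl₃), ?_, ?_, ?_⟩
  · rw [List.length_append, List.length_cons, hlen₁, flatPairs_length,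
      Finset.length_toList, Finset.card_univ, hd]
    have h1 : pl₃.length ≤ M := by
      rw [hpl₃, List.length_map]
      exact hlb_len
    have hM1 : 1 ≤ M := one_le_M X hX hna M hM
    have h2 : Fintype.card H * d ≤ M * (d * Fintype.card H) := by
      calc Fintype.card H * d = 1 * (d * Fintype.card H) := by ring
        _ ≤ M * (d * Fintype.card H) := Nat.mul_le_mul_right _ hM1
    calc Fintype.card H * d + (pl₃.length + 1)
        ≤ Fintype.card H * d + (M + 1) := by omega
      _ ≤ M * (d * Fintype.card H) + (M + 1) := by omega
      _ = M * (d * Fintype.card H + 1) + 1 := by ring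
  · intro q hq
    rcases List.mem_append.1 hq with h | h
    · exact hpals₁ q h
    · rcases List.mem_cons.1 h with h | h
      · rw [h]
        exact hpal₂
      · exact hpals₃ q h
  · rw [List.prod_append, List.prod_cons, hprod₁, hprod₃, ← hgdec]
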